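/- Let n ≥ 2 and A = (a_{ij}) be an n × n real matrix. Define σ₁(A) = Σᵢ a_{ii}, σ₁(A|1) = Σ_{i=2}^n a_{ii}, and σ₂(A) = Σ_{1≤i<j≤n} (a_{ii}a_{jj} − a_{ij}a_{ji}). Then σ₁(A)·σ₁(A|1) = σ₂(A) + (n/(2(n−1)))·σ₁(A|1)² + Σ_{1≤i<j≤n} a_{ij}a_{ji} + (1/(2(n−1)))·Σ_{2≤i<j≤n} (a_{ii} − a_{jj})². -/

import Mathlib

lemma pair_sum {n : ℕ} (s : Finset (Fin n)) (f : Fin n → Fin n → ℝ)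
    (hsym : ∀ i j, f i j = f j i) :
    2 * (∑ i ∈ s, ∑ j ∈ s, if i < j then f i j else 0) =
      (∑ i ∈ s, ∑ j ∈ s, f i j) - ∑ i ∈ s, f i i := by
  have h1 : (∑ i ∈ s, ∑ j ∈ s, f i j)
      = (∑ i ∈ s, ∑ j ∈ s, if i < j then f i j else 0)
      + ((∑ i ∈ s, ∑ j ∈ s, if j < i then f i j else 0)
      + (∑ i ∈ s, ∑ j ∈ s, if i = j then f i j else 0)) := by
    have e : ∀ i ∈ s, ∀ j ∈ s, f i j = (if i < j then f i j else 0)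
        + ((if j < i then f i j else 0) + (if i = j then f i j else 0)) := by
      intro i _ j _
      rcases lt_trichotomy i j with h | h | h
      · simp [h, h.ne, not_lt.2 h.le]
      · simp [h]
      · simp [h, h.ne', not_lt.2 h.le]
    calc (∑ i ∈ s, ∑ j ∈ s, f i j)
        = ∑ i ∈ s, ∑ j ∈ s, ((if i < j then f i j else 0)
          + ((if j < i then f i j else 0) + (if i = j then f i j else 0))) :=
          Finset.sum_congr rfl fun i hi => Finset.sum_congr rfl fun j hj => e i hi j hj
      _ = _ := by simp only [Finset.sum_add_distrib]
  have h2 : (∑ i ∈ s, ∑ j ∈ s, if j < i then f i j else 0)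
      = ∑ i ∈ s, ∑ j ∈ s, if i < j then f i j else 0 := by
    rw [Finset.sum_comm]
    exact Finset.sum_congr rfl fun i _ => Finset.sum_congr rfl fun j _ => by
      rw [hsym]
  have h3 : (∑ i ∈ s, ∑ j ∈ s, if i = j then f i j else 0) = ∑ i ∈ s, f i i := by
    refine Finset.sum_congr rfl fun i hi => ?_
    rw [Finset.sum_ite_eq s i (fun j => f i j), if_pos hi]
  rw [h2, h3] at h1
  linarith

/-- Proposition 2.1 (identity): for an `n × n` real matrix `A` with `n ≥ 2`,
`σ₁(A)·σ₁(A|1) = σ₂(A) + (n/(2(n−1)))·σ₁(A|1)² + Σ_{i<j} a_{ij}a_{ji}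
  + (1/(2(n−1)))·Σ_{2≤i<j} (a_{ii}−a_{jj})²`. -/
theorem stmt0 (n : ℕ) (hn : 2 ≤ n) (A : Matrix (Fin n) (Fin n) ℝ) :
    (∑ i, A i i) * (∑ i ∈ Finset.univ.filter (fun i : Fin n => i.val ≠ 0), A i i) =
      (∑ i, ∑ j, if i < j then A i i * A j j - A i j * A j i else 0)
      + (n : ℝ) / (2 * ((n : ℝ) - 1)) *
          (∑ i ∈ Finset.univ.filter (fun i : Fin n => i.val ≠ 0), A i i) ^ 2
      + (∑ i, ∑ j, if i < j then A i j * A j i else 0)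
      + 1 / (2 * ((n : ℝ) - 1)) *
          (∑ i, ∑ j, if i.val ≠ 0 ∧ i < j then (A i i - A j j) ^ 2 else 0) := by
  classical
  set d : Fin n → ℝ := fun i => A i i with hd
  have hdz : ∀ i, A i i = d i := fun i => rfl
  set z : Fin n := ⟨0, by omega⟩ with hz
  set s : Finset (Fin n) := Finset.univ.filter (fun i : Fin n => i.val ≠ 0) with hs
  have hsz : s = Finset.univ.erase z := by
    ext i
    simp [hs, hz, Fin.ext_iff]
  have hcard : (s.card : ℝ) = (n : ℝ) - 1 := by
    rw [hsz, Finset.card_erase_of_mem (Finset.mem_univ z)]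
    simp only [Finset.card_univ, Fintype.card_fin]
    push_cast [Nat.cast_sub (by omega : 1 ≤ n)]
    ring
  set S : ℝ := ∑ i, d i with hS
  set T : ℝ := ∑ i ∈ s, d i with hT
  set P : ℝ := ∑ i, (d i)^2 with hP
  set Q : ℝ := ∑ i ∈ s, (d i)^2 with hQ
  have hST : S = d z + T := by
    rw [hS, hT, hsz, ← Finset.add_sum_erase _ _ (Finset.mem_univ z)]
  have hPQ : P = (d z)^2 + Q := by
    rw [hP, hQ, hsz, ← Finset.add_sum_erase _ _ (Finset.mem_univ z)]
  set X : ℝ := ∑ i, ∑ j, if i < j then d i * d j else 0 with hXdef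
  set W : ℝ := ∑ i ∈ s, ∑ j ∈ s, if i < j then (d i - d j)^2 else 0 with hWdef
  -- cancellation of off-diagonal products
  have hcancel : (∑ i, ∑ j, if i < j then A i i * A j j - A i j * A j i else 0)
      + (∑ i, ∑ j, if i < j then A i j * A j i else 0) = X := by
    rw [hXdef, ← Finset.sum_add_distrib]
    refine Finset.sum_congr rfl fun i _ => ?_
    rw [← Finset.sum_add_distrib]
    refine Finset.sum_congr rfl fun j _ => ?_
    split_ifs <;> simp [hd]
  -- X identity
  have hX : 2 * X = S^2 - P := by
    have h := pair_sum Finset.univ (fun i j => d i * d j) (fun i j => mul_comm _ _)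
    rw [← Finset.sum_mul_sum] at h
    rw [hXdef, hS, hP]
    rw [h]
    ring
  -- W conversion
  have hWconv : (∑ i, ∑ j, if i.val ≠ 0 ∧ i < j then (A i i - A j j) ^ 2 else 0) = W := by
    rw [hWdef, hs, Finset.sum_filter]
    refine Finset.sum_congr rfl fun i _ => ?_
    by_cases hi : i.val ≠ 0
    · rw [if_pos hi, Finset.sum_filter]
      refine Finset.sum_congr rfl fun j _ => ?_
      by_cases hij : i < j
      · have hj : j.val ≠ 0 := by
          have : i.val < j.val := hij
          omega
        simp [hi, hij, hj, hd]
      · simp [hij]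
    · simp [hi]
  -- W value
  have hW : 2 * W = 2 * (((n:ℝ) - 1) * Q - T^2) := by
    have h := pair_sum s (fun i j => (d i - d j)^2) (fun i j => by ring)
    have hinner : ∀ i ∈ s, (∑ j ∈ s, (d i - d j)^2)
        = (s.card : ℝ) * (d i)^2 + Q - 2 * (d i * T) := by
      intro i _
      have e : ∀ j, (d i - d j)^2 = (d i)^2 + ((d j)^2 - 2 * (d i * d j)) := by
        intro j; ring
      simp_rw [e, Finset.sum_add_distrib, Finset.sum_sub_distrib, Finset.sum_const,
        nsmul_eq_mul, ← Finset.mul_sum]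
      rw [← hT]
      ring
    have houter : (∑ i ∈ s, ∑ j ∈ s, (d i - d j)^2)
        = 2 * ((s.card : ℝ) * Q) - 2 * T^2 := by
      rw [Finset.sum_congr rfl hinner]
      simp_rw [Finset.sum_sub_distrib, Finset.sum_add_distrib, Finset.sum_const,
        nsmul_eq_mul, ← Finset.mul_sum, ← Finset.sum_mul]
      rw [← hQ, ← hT, hcard]
      ring
    have hdiag : (∑ i ∈ s, (d i - d i)^2) = 0 := by simp
    rw [hWdef]
    rw [houter, hdiag, hcard] at h
    linarith
  -- final arithmetic
  rw [hWconv]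
  have h2n : (2:ℝ) ≤ (n:ℝ) := by exact_mod_cast hn
  have hne : 2 * ((n:ℝ) - 1) ≠ 0 := by nlinarith
  have key : S * T = X + (n : ℝ) / (2 * ((n : ℝ) - 1)) * T ^ 2
      + 1 / (2 * ((n : ℝ) - 1)) * W := by
    have hXv : X = (S^2 - P)/2 := by linarith
    have hWv : W = ((n:ℝ)-1) * Q - T^2 := by linarith
    rw [hXv, hWv, hST, hPQ]
    have hne1 : (n:ℝ) - 1 ≠ 0 := by linarith
    field_simp
    ring
  linarith [hcancel, key]
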